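/- For n ∈ ℕ let Γ(n) denote the principal congruence subgroup of SL₂(ℤ), i.e., the kernel of the entrywise reduction homomorphism SL₂(ℤ) → SL₂(ℤ/nℤ). Let (b_n)_{n∈ℕ} be a sequence of pairwise coprime positive integers. Then A = SL₂(ℤ) \ ⋃_{n∈ℕ} Γ(b_n) is not piecewise syndetic in the group SL₂(ℤ). -/

import Mathlib

/-- A set `A` in a semigroup `G` is thick if for every finite `F ⊆ G`
there exists `g ∈ G` with `Fg ⊆ A`. -/
def Thick {G : Type*} [Semigroup G] (A : Set G) : Prop :=
  ∀ F : Finset G, ∃ g : G, ∀ f ∈ F, f * g ∈ A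

/-- A set `A` in a semigroup `G` is piecewise syndetic if there is a finite
`H ⊆ G` such that `H⁻¹A = ⋃_{h ∈ H} h⁻¹A` is thick. -/
def PiecewiseSyndetic {G : Type*} [Semigroup G] (A : Set G) : Prop :=
  ∃ H : Finset G, Thick {x : G | ∃ h ∈ H, h * x ∈ A}

/-- `SL₂(ℤ)`. -/
abbrev SL2Z := Matrix.SpecialLinearGroup (Fin 2) ℤ

/-- The principal congruence subgroup `Γ(n)`: the kernel of entrywise
reduction `SL₂(ℤ) → SL₂(ℤ/nℤ)`. -/
def GammaSL (n : ℕ) : Subgroup SL2Z :=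
  (Matrix.SpecialLinearGroup.map (n := Fin 2) (Int.castRingHom (ZMod n))).ker

open Matrix

/-- The entrywise reduction homomorphism. -/
abbrev redSL (n : ℕ) : SL2Z →* Matrix.SpecialLinearGroup (Fin 2) (ZMod n) :=
  Matrix.SpecialLinearGroup.map (Int.castRingHom (ZMod n))

/-- The lower-triangular elementary matrix `L = !![1,0;1,1]`. -/
def Lelt : SL2Z := ⟨!![1, 0; 1, 1], by norm_num [Matrix.det_fin_two_of]⟩

lemma coe_Lelt : (Lelt : Matrix (Fin 2) (Fin 2) ℤ) = !![1, 0; 1, 1] := rfl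

lemma S_eq_TLT : ModularGroup.S = ModularGroup.T⁻¹ * Lelt * ModularGroup.T⁻¹ := by
  ext i j
  fin_cases i <;> fin_cases j <;>
    simp [ModularGroup.coe_S, ModularGroup.coe_T, coe_Lelt, Matrix.adjugate_fin_two,
      Matrix.SpecialLinearGroup.coe_mul, Matrix.mul_apply, Fin.sum_univ_two]

lemma S_mem_closure :
    ModularGroup.S ∈ Subgroup.closure ({ModularGroup.T, Lelt} : Set SL2Z) := by
  have hT : ModularGroup.T ∈ Subgroup.closure ({ModularGroup.T, Lelt} : Set SL2Z) :=
    Subgroup.subset_closure (by simp)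
  have hL : Lelt ∈ Subgroup.closure ({ModularGroup.T, Lelt} : Set SL2Z) :=
    Subgroup.subset_closure (by simp)
  rw [S_eq_TLT]
  exact mul_mem (mul_mem (inv_mem hT) hL) (inv_mem hT)

/-- `SL₂(ℤ)` is generated by the two elementary matrices `T` and `L`. -/
lemma mem_closure_TL (x : SL2Z) :
    x ∈ Subgroup.closure ({ModularGroup.T, Lelt} : Set SL2Z) := by
  have hT : ModularGroup.T ∈ Subgroup.closure ({ModularGroup.T, Lelt} : Set SL2Z) :=
    Subgroup.subset_closure (by simp)
  suffices h : ∀ n : ℕ, ∀ x : SL2Z, (x 1 0).natAbs = n →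
      x ∈ Subgroup.closure ({ModularGroup.T, Lelt} : Set SL2Z) from h _ x rfl
  intro n
  induction n using Nat.strong_induction_on with
  | _ n ih =>
    intro x hx
    rcases eq_or_ne (x 1 0) 0 with hc | hc
    · -- bottom-left entry is zero
      have hdet : x 0 0 * x 1 1 - x 0 1 * x 1 0 = 1 := by
        have := x.property
        rwa [Matrix.det_fin_two] at this
      rw [hc, mul_zero, sub_zero] at hdet
      rcases Int.mul_eq_one_iff_eq_one_or_neg_one.mp hdet with ⟨ha, hd⟩ | ⟨ha, hd⟩
      · have hxT : x = ModularGroup.T ^ (x 0 1) := by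
          ext i j
          fin_cases i <;> fin_cases j <;>
            simp [ModularGroup.coe_T_zpow, ha, hd, hc]
        rw [hxT]
        exact zpow_mem hT _
      · have hxT : x = ModularGroup.S * ModularGroup.S * ModularGroup.T ^ (-(x 0 1)) := by
          ext i j
          have hSS := ModularGroup.S_mul_S_eq
          fin_cases i <;> fin_cases j <;>
            simp [Matrix.SpecialLinearGroup.coe_mul, hSS, ModularGroup.coe_T_zpow,
              ModularGroup.coe_S, Matrix.mul_apply, Fin.sum_univ_two, ha, hd, hc]
        rw [hxT]
        exact mul_mem (mul_mem S_mem_closure S_mem_closure) (zpow_mem hT _)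
    · -- Euclidean step on the first column
      set q : ℤ := x 0 0 / x 1 0 with hq
      set y : SL2Z := ModularGroup.S * (ModularGroup.T ^ (-q) * x) with hy
      have hy10 : y 1 0 = x 0 0 % x 1 0 := by
        show ((y : Matrix (Fin 2) (Fin 2) ℤ)) 1 0 = _
        rw [hy, Matrix.SpecialLinearGroup.coe_mul, Matrix.SpecialLinearGroup.coe_mul,
          ModularGroup.coe_S, ModularGroup.coe_T_zpow, Int.emod_def]
        simp [Matrix.mul_apply, Matrix.vecMul, dotProduct, Fin.sum_univ_two]
        ring
      have hlt : (y 1 0).natAbs < n := by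
        rw [hy10, ← hx]
        have h1 : 0 ≤ x 0 0 % x 1 0 := Int.emod_nonneg _ hc
        have h2 : x 0 0 % x 1 0 < |x 1 0| := Int.emod_lt_abs _ hc
        have := Int.natAbs_lt_natAbs_of_nonneg_of_lt h1 h2
        simpa [Int.natAbs_abs] using this
      have hymem := ih _ hlt y rfl
      have hxy : x = ModularGroup.T ^ q * (ModularGroup.S⁻¹ * y) := by
        rw [hy]
        group
      rw [hxy]
      exact mul_mem (zpow_mem hT _) (mul_mem (inv_mem S_mem_closure) hymem)

/-- Monotonicity of congruence kernels: if `m ∣ M` and `c` reduces to `1` mod `M`,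
then `c` reduces to `1` mod `m`. -/
lemma redSL_eq_one_of_dvd {m M : ℕ} (hdvd : m ∣ M) {c : SL2Z} (hc : redSL M c = 1) :
    redSL m c = 1 := by
  have hcomp : redSL m c =
      Matrix.SpecialLinearGroup.map (ZMod.castHom hdvd (ZMod m)) (redSL M c) := by
    apply Subtype.ext
    ext i j
    simp [Matrix.SpecialLinearGroup.map_apply_coe]
  rw [hcomp, hc]
  exact MonoidHom.map_one _

/-- Key lifting lemma: if `M` and `m` are coprime then any element of `SL₂(ℤ)` can be
matched mod `m` by an element of `Γ(M)`. -/
lemma exists_congr_lift {M m : ℕ} (hc : Nat.Coprime M m) (x : SL2Z) :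
    ∃ c : SL2Z, redSL M c = 1 ∧ redSL m c = redSL m x := by
  -- the set of x for which such a lift exists is a subgroup containing T,
  -- and it is stable under conjugation; hence it contains L and all of SL₂(ℤ).
  set Q : SL2Z → Prop := fun x => ∃ c : SL2Z, redSL M c = 1 ∧ redSL m c = redSL m x with hQ
  have hQT : Q ModularGroup.T := by
    obtain ⟨k, hk0, hk1⟩ := Nat.chineseRemainder hc 0 1
    refine ⟨ModularGroup.T ^ (k : ℤ), ?_, ?_⟩
    · apply Subtype.ext
      rw [Matrix.SpecialLinearGroup.map_apply_coe, RingHom.mapMatrix_apply,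
        ModularGroup.coe_T_zpow]
      have h0 : ((k : ℕ) : ZMod M) = 0 := by
        have := (ZMod.natCast_eq_natCast_iff k 0 M).mpr hk0
        simpa using this
      ext i j
      fin_cases i <;> fin_cases j <;> simp [h0]
    · apply Subtype.ext
      rw [Matrix.SpecialLinearGroup.map_apply_coe, Matrix.SpecialLinearGroup.map_apply_coe,
        RingHom.mapMatrix_apply, RingHom.mapMatrix_apply, ModularGroup.coe_T_zpow,
        ModularGroup.coe_T]
      have h1 : ((k : ℕ) : ZMod m) = 1 := by
        have := (ZMod.natCast_eq_natCast_iff k 1 m).mpr hk1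
        simpa using this
      ext i j
      fin_cases i <;> fin_cases j <;> simp [h1]
  have hQinv : ∀ x, Q x → Q x⁻¹ := by
    rintro x ⟨c, h1, h2⟩
    exact ⟨c⁻¹, by rw [MonoidHom.map_inv, h1, inv_one], by rw [MonoidHom.map_inv, MonoidHom.map_inv, h2]⟩
  have hQconj : ∀ (u x : SL2Z), Q x → Q (u * x * u⁻¹) := by
    rintro u x ⟨c, h1, h2⟩
    refine ⟨u * c * u⁻¹, ?_, ?_⟩
    · rw [MonoidHom.map_mul, MonoidHom.map_mul, h1, MonoidHom.map_inv, mul_one, mul_inv_cancel]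
    · rw [MonoidHom.map_mul, MonoidHom.map_mul, MonoidHom.map_mul, MonoidHom.map_mul, h2]
  have hQL : Q Lelt := by
    have hL : Lelt = ModularGroup.S * ModularGroup.T⁻¹ * ModularGroup.S⁻¹ := by
      ext i j
      fin_cases i <;> fin_cases j <;>
        simp [coe_Lelt, ModularGroup.coe_S, ModularGroup.coe_T, Matrix.adjugate_fin_two,
          Matrix.SpecialLinearGroup.coe_mul, Matrix.mul_apply, Fin.sum_univ_two]
    rw [hL]
    exact hQconj _ _ (hQinv _ hQT)
  have h := mem_closure_TL x
  induction h using Subgroup.closure_induction with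
  | mem y hy =>
    rcases hy with hy | hy
    · rw [hy]; exact hQT
    · rw [hy]; exact hQL
  | one => exact ⟨1, by simp, by simp⟩
  | mul y z hy hz hQy hQz =>
    obtain ⟨c1, hc11, hc12⟩ := hQy
    obtain ⟨c2, hc21, hc22⟩ := hQz
    exact ⟨c1 * c2, by rw [MonoidHom.map_mul, hc11, hc21, mul_one],
      by rw [MonoidHom.map_mul, MonoidHom.map_mul, hc12, hc22]⟩
  | inv y hy hQy => exact hQinv _ hQy

/-- Simultaneous congruence lifting for finitely many pairwise coprime moduli. -/
lemma exists_simultaneous {ι : Type*} [DecidableEq ι] (s : Finset ι) (m : ι → ℕ)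
    (hcop : ∀ i j, i ≠ j → Nat.Coprime (m i) (m j)) (x : ι → SL2Z) :
    ∃ f : SL2Z, ∀ i ∈ s, redSL (m i) f = redSL (m i) (x i) := by
  induction s using Finset.induction_on with
  | empty => exact ⟨1, fun i hi => absurd hi (Finset.notMem_empty i)⟩
  | @insert a s ha ih =>
    obtain ⟨f, hf⟩ := ih
    obtain ⟨c, hc1, hc2⟩ := exists_congr_lift
      (Nat.Coprime.prod_left fun j hj => hcop j a (ne_of_mem_of_not_mem hj ha)) (f⁻¹ * x a)
    refine ⟨f * c, fun i hi => ?_⟩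
    rcases Finset.mem_insert.mp hi with rfl | hi
    · rw [MonoidHom.map_mul, hc2, MonoidHom.map_mul, MonoidHom.map_inv]
      group
    · have hdvd : m i ∣ ∏ j ∈ s, m j := Finset.dvd_prod_of_mem m hi
      rw [MonoidHom.map_mul, redSL_eq_one_of_dvd hdvd hc1, mul_one, hf i hi]

/-- If `(b n)` is a sequence of pairwise coprime positive integers, then
`SL₂(ℤ) \ ⋃ₙ Γ(bₙ)` is not piecewise syndetic in `SL₂(ℤ)`. -/
theorem sl2z_not_piecewiseSyndetic (b : ℕ → ℕ) (hpos : ∀ n, 0 < b n)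
    (hcop : ∀ m n, m ≠ n → Nat.Coprime (b m) (b n)) :
    ¬ PiecewiseSyndetic (Set.univ \ ⋃ n, (GammaSL (b n) : Set SL2Z)) := by
  classical
  rintro ⟨H, hthick⟩
  -- assign a distinct modulus to each element of `H`
  let ι : {x : SL2Z // x ∈ H} → ℕ := fun h => (H.equivFin h : ℕ)
  have hι : Function.Injective ι := fun a b' hab =>
    H.equivFin.injective (Fin.val_injective hab)
  haveI : ∀ h : {x : SL2Z // x ∈ H}, NeZero (b (ι h)) := fun h => ⟨(hpos _).ne'⟩
  -- the finite set `F` of candidate lifts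
  let pick : (∀ h : {x : SL2Z // x ∈ H}, Matrix (Fin 2) (Fin 2) (ZMod (b (ι h)))) → SL2Z :=
    fun v => if hv : ∃ f : SL2Z, ∀ h, ((redSL (b (ι h)) f :
        Matrix.SpecialLinearGroup (Fin 2) (ZMod (b (ι h)))) :
        Matrix (Fin 2) (Fin 2) (ZMod (b (ι h)))) = v h then hv.choose else 1
  obtain ⟨g, hg⟩ := hthick (Finset.image pick Finset.univ)
  -- the residue data of `g`
  set v : ∀ h : {x : SL2Z // x ∈ H}, Matrix (Fin 2) (Fin 2) (ZMod (b (ι h))) :=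
    fun h => ((redSL (b (ι h)) ((h : SL2Z)⁻¹ * g⁻¹) :
      Matrix.SpecialLinearGroup (Fin 2) (ZMod (b (ι h)))) :
      Matrix (Fin 2) (Fin 2) (ZMod (b (ι h)))) with hvdef
  have hex : ∃ f : SL2Z, ∀ h, ((redSL (b (ι h)) f :
      Matrix.SpecialLinearGroup (Fin 2) (ZMod (b (ι h)))) :
      Matrix (Fin 2) (Fin 2) (ZMod (b (ι h)))) = v h := by
    obtain ⟨f, hf⟩ := exists_simultaneous Finset.univ (fun h => b (ι h))
      (fun i j hij => hcop _ _ (hι.ne hij)) (fun h => (h : SL2Z)⁻¹ * g⁻¹)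
    exact ⟨f, fun h => by rw [hf h (Finset.mem_univ h)]⟩
  obtain ⟨h, hhH, hmem⟩ := hg (pick v)
    (Finset.mem_image_of_mem pick (Finset.mem_univ v))
  have hpv : pick v = hex.choose := dif_pos hex
  have hfv : redSL (b (ι ⟨h, hhH⟩)) (pick v) =
      redSL (b (ι ⟨h, hhH⟩)) ((h : SL2Z)⁻¹ * g⁻¹) := by
    apply Subtype.ext
    rw [hpv]
    exact hex.choose_spec ⟨h, hhH⟩
  have hGamma : redSL (b (ι ⟨h, hhH⟩)) (h * (pick v * g)) = 1 := by
    rw [MonoidHom.map_mul, MonoidHom.map_mul, hfv, MonoidHom.map_mul,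
      MonoidHom.map_inv, MonoidHom.map_inv]
    group
  exact hmem.2 (Set.mem_iUnion.mpr ⟨ι ⟨h, hhH⟩,
    SetLike.mem_coe.mpr (MonoidHom.mem_ker.mpr hGamma)⟩)
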